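/- Let t = Σ_{0 ≤ i ≤ ν} ε_i 2^i with ε_i ∈ {0,1}. Then m₂(t) = Σ_{0 ≤ i ≤ ν} ε_i − Σ_{0 ≤ i < j ≤ ν} ε_i ε_j 2^{i-j}, where m₂ is defined by m₂(0)=0, m₂(1)=1, m₂(2t)=m₂(t), m₂(2t+1)=(m₂(t)+m₂(t+1)+1)/2. -/

import Mathlib

open Finset

noncomputable def fb (t N : ℕ) : ℝ :=
  ∑ j ∈ Finset.range N, ((t / 2 ^ j % 2 : ℕ) : ℝ) * (1 - ((t % 2 ^ j : ℕ) : ℝ) / 2 ^ j)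

noncomputable def sb (t N : ℕ) : ℝ :=
  ∑ j ∈ Finset.range N, ((t / 2 ^ j % 2 : ℕ) : ℝ) / 2 ^ j

lemma fb_mono {t N M : ℕ} (hN : t < 2 ^ N) (hNM : N ≤ M) : fb t M = fb t N := by
  unfold fb
  refine (Finset.sum_subset (Finset.range_subset_range.2 hNM) ?_).symm
  intro j hj hj'
  simp only [Finset.mem_range] at hj hj'
  have : t < 2 ^ j := lt_of_lt_of_le hN (Nat.pow_le_pow_right (by norm_num) (le_of_not_gt hj'))
  rw [Nat.div_eq_of_lt this]
  simp

lemma sb_mono {t N M : ℕ} (hN : t < 2 ^ N) (hNM : N ≤ M) : sb t M = sb t N := by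
  unfold sb
  refine (Finset.sum_subset (Finset.range_subset_range.2 hNM) ?_).symm
  intro j hj hj'
  simp only [Finset.mem_range] at hj hj'
  have : t < 2 ^ j := lt_of_lt_of_le hN (Nat.pow_le_pow_right (by norm_num) (le_of_not_gt hj'))
  rw [Nat.div_eq_of_lt this]
  simp

lemma fb_congr {t N M : ℕ} (hN : t < 2 ^ N) (hM : t < 2 ^ M) : fb t N = fb t M := by
  rcases le_total N M with h | h
  · exact (fb_mono hN h).symm
  · exact fb_mono hM h

lemma sb_congr {t N M : ℕ} (hN : t < 2 ^ N) (hM : t < 2 ^ M) : sb t N = sb t M := by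
  rcases le_total N M with h | h
  · exact (sb_mono hN h).symm
  · exact sb_mono hM h

lemma div_even (t j : ℕ) : 2 * t / 2 ^ (j + 1) = t / 2 ^ j := by
  rw [pow_succ, mul_comm (2 ^ j) 2, Nat.mul_div_mul_left _ _ (by norm_num)]

lemma mod_even (t j : ℕ) : 2 * t % 2 ^ (j + 1) = 2 * (t % 2 ^ j) := by
  rw [pow_succ, mul_comm (2 ^ j) 2, Nat.mul_mod_mul_left]

lemma div_odd (t j : ℕ) : (2 * t + 1) / 2 ^ (j + 1) = t / 2 ^ j := by
  rw [pow_succ, mul_comm (2 ^ j) 2, ← Nat.div_div_eq_div_mul]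
  congr 1
  omega

lemma mod_odd (t j : ℕ) : (2 * t + 1) % 2 ^ (j + 1) = 2 * (t % 2 ^ j) + 1 := by
  have hk : 0 < 2 ^ j := Nat.pow_pos (by norm_num)
  have h := Nat.div_add_mod t (2 ^ j)
  have h1 : 2 * t + 1 = 2 ^ (j+1) * (t / 2 ^ j) + (2 * (t % 2 ^ j) + 1) := by
    conv_lhs => rw [← h]
    rw [pow_succ]; ring
  rw [h1, Nat.mul_add_mod]
  exact Nat.mod_eq_of_lt (by have := Nat.mod_lt t hk; rw [pow_succ]; omega)

lemma fb_even (t N : ℕ) : fb (2 * t) (N + 1) = fb t N := by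
  unfold fb
  rw [Finset.sum_range_succ']
  have h0 : (((2 * t) / 2 ^ 0 % 2 : ℕ) : ℝ) * (1 - (((2 * t) % 2 ^ 0 : ℕ) : ℝ) / 2 ^ 0) = 0 := by
    simp [Nat.mul_mod_right]
  rw [h0, add_zero]
  refine Finset.sum_congr rfl fun j _ => ?_
  rw [div_even, mod_even]
  have hj : (2:ℝ) ^ j ≠ 0 := by positivity
  push_cast
  rw [show ((2:ℝ) ^ (j+1)) = 2 * 2 ^ j by ring]
  field_simp

lemma sb_even (t N : ℕ) : sb (2 * t) (N + 1) = sb t N / 2 := by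
  unfold sb
  rw [Finset.sum_range_succ']
  have h0 : (((2 * t) / 2 ^ 0 % 2 : ℕ) : ℝ) / 2 ^ 0 = 0 := by
    simp [Nat.mul_mod_right]
  rw [h0, add_zero, Finset.sum_div]
  refine Finset.sum_congr rfl fun j _ => ?_
  rw [div_even, show ((2:ℝ) ^ (j+1)) = 2 ^ j * 2 by ring, div_div]

lemma fb_odd (t N : ℕ) : fb (2 * t + 1) (N + 1) = 1 + fb t N - sb t N / 2 := by
  unfold fb sb
  rw [Finset.sum_range_succ']
  have h0 : (((2 * t + 1) / 2 ^ 0 % 2 : ℕ) : ℝ) * (1 - (((2 * t + 1) % 2 ^ 0 : ℕ) : ℝ) / 2 ^ 0) = 1 := by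
    have h1 : (2 * t + 1) % 2 = 1 := by omega
    simp only [pow_zero, Nat.div_one, h1, Nat.mod_one, Nat.cast_one, Nat.cast_zero]
    norm_num
  rw [h0, Finset.sum_div, add_sub_assoc, ← Finset.sum_sub_distrib]
  have hc : ∀ j ∈ Finset.range N,
      (((2*t+1) / 2 ^ (j+1) % 2 : ℕ) : ℝ) * (1 - (((2*t+1) % 2 ^ (j+1) : ℕ) : ℝ) / 2 ^ (j+1))
        = (((t / 2 ^ j % 2 : ℕ) : ℝ) * (1 - ((t % 2 ^ j : ℕ) : ℝ) / 2 ^ j)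
            - ((t / 2 ^ j % 2 : ℕ) : ℝ) / 2 ^ j / 2) := by
    intro j _
    rw [div_odd, mod_odd]
    have hj : (2:ℝ) ^ j ≠ 0 := by positivity
    push_cast
    rw [show ((2:ℝ) ^ (j+1)) = 2 * 2 ^ j by ring]
    field_simp
    ring
  rw [Finset.sum_congr rfl hc]
  ring

lemma sb_odd (t N : ℕ) : sb (2 * t + 1) (N + 1) = 1 + sb t N / 2 := by
  unfold sb
  rw [Finset.sum_range_succ']
  have h0 : (((2 * t + 1) / 2 ^ 0 % 2 : ℕ) : ℝ) / 2 ^ 0 = 1 := by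
    have h1 : (2 * t + 1) % 2 = 1 := by omega
    simp only [pow_zero, Nat.div_one, h1, Nat.mod_one, Nat.cast_one, Nat.cast_zero]
    norm_num
  rw [h0, Finset.sum_div, add_comm]
  congr 1
  refine Finset.sum_congr rfl fun j _ => ?_
  rw [div_odd, show ((2:ℝ) ^ (j+1)) = 2 ^ j * 2 by ring, div_div]

noncomputable def cF (t : ℕ) : ℝ := fb t (t + 1)
noncomputable def cS (t : ℕ) : ℝ := sb t (t + 1)

lemma lt21 (t : ℕ) : t < 2 ^ (t + 1) :=
  lt_of_lt_of_le (Nat.lt_two_pow_self) (Nat.pow_le_pow_right (by norm_num) (Nat.le_succ t))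

lemma cF_even (t : ℕ) : cF (2 * t) = cF t := by
  have h2 : 2 * t < 2 ^ (t + 1 + 1) := by
    have := lt21 t; rw [pow_succ]; omega
  unfold cF
  rw [fb_congr (lt21 (2 * t)) h2, fb_even]

lemma cS_even (t : ℕ) : cS (2 * t) = cS t / 2 := by
  have h2 : 2 * t < 2 ^ (t + 1 + 1) := by
    have := lt21 t; rw [pow_succ]; omega
  unfold cS
  rw [sb_congr (lt21 (2 * t)) h2, sb_even]

lemma cF_odd (t : ℕ) : cF (2 * t + 1) = 1 + cF t - cS t / 2 := by
  have h2 : 2 * t + 1 < 2 ^ (t + 1 + 1) := by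
    have := lt21 t; rw [pow_succ]; omega
  unfold cF cS
  rw [fb_congr (lt21 (2 * t + 1)) h2, fb_odd]

lemma cS_odd (t : ℕ) : cS (2 * t + 1) = 1 + cS t / 2 := by
  have h2 : 2 * t + 1 < 2 ^ (t + 1 + 1) := by
    have := lt21 t; rw [pow_succ]; omega
  unfold cS
  rw [sb_congr (lt21 (2 * t + 1)) h2, sb_odd]

lemma cF_key (t : ℕ) : cF (t + 1) = cF t + 1 - cS t := by
  induction t using Nat.strong_induction_on with
  | _ t ih =>
    rcases Nat.even_or_odd t with ⟨u, hu⟩ | ⟨u, hu⟩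
    · have h : t = 2 * u := by omega
      subst h
      rw [cF_odd, cF_even, cS_even]
      ring
    · have h : t = 2 * u + 1 := by omega
      subst h
      have h2 : 2 * u + 1 + 1 = 2 * (u + 1) := by ring
      rw [h2, cF_even, cF_odd, cS_odd, ih u (by omega)]
      ring

lemma cF_zero : cF 0 = 0 := by simp [cF, fb]

lemma cF_one : cF 1 = 1 := by
  norm_num [cF, fb, Finset.sum_range_succ]

lemma m_eq_cF (m : ℕ → ℝ) (h0 : m 0 = 0) (h1 : m 1 = 1)
    (heven : ∀ t : ℕ, m (2 * t) = m t)
    (hodd : ∀ t : ℕ, m (2 * t + 1) = (m t + m (t + 1) + 1) / 2) :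
    ∀ t, m t = cF t := by
  intro t
  induction t using Nat.strong_induction_on with
  | _ t ih =>
    match t, ih with
    | 0, _ => rw [h0, cF_zero]
    | 1, _ => rw [h1, cF_one]
    | (n + 2), ih =>
      rcases Nat.even_or_odd (n + 2) with ⟨u, hu⟩ | ⟨u, hu⟩
      · have h : n + 2 = 2 * u := by omega
        rw [h, heven, ih u (by omega), cF_even]
      · have h : n + 2 = 2 * u + 1 := by omega
        rw [h, hodd, ih u (by omega), ih (u + 1) (by omega), cF_key, cF_odd]
        ring

lemma sum_two_pow (n : ℕ) : (∑ i ∈ Finset.range n, 2 ^ i) = 2 ^ n - 1 := by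
  induction n with
  | zero => simp
  | succ k ih => rw [Finset.sum_range_succ, ih, pow_succ]; have := Nat.one_le_two_pow (n := k); omega

/-- exact formula `m₂(t) = Σ ε_i − Σ_{i<j} ε_i ε_j 2^{i-j}`
for `t = Σ_{i ≤ ν} ε_i 2^i` with binary digits `ε_i ∈ {0,1}`. -/
theorem cusick_stmt9 (m : ℕ → ℝ) (h0 : m 0 = 0) (h1 : m 1 = 1)
    (heven : ∀ t : ℕ, m (2 * t) = m t)
    (hodd : ∀ t : ℕ, m (2 * t + 1) = (m t + m (t + 1) + 1) / 2)
    (ν : ℕ) (ε : ℕ → ℕ) (hε : ∀ i, i ≤ ν → ε i = 0 ∨ ε i = 1) :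
    m (∑ i ∈ Finset.range (ν + 1), ε i * 2 ^ i)
      = (∑ i ∈ Finset.range (ν + 1), (ε i : ℝ))
        - ∑ j ∈ Finset.range (ν + 1), ∑ i ∈ Finset.range j,
            (ε i : ℝ) * (ε j : ℝ) * (2 : ℝ) ^ ((i : ℤ) - (j : ℤ)) := by
  set T := ∑ i ∈ Finset.range (ν + 1), ε i * 2 ^ i with hT
  have hlow : ∀ j, j ≤ ν + 1 → (∑ i ∈ Finset.range j, ε i * 2 ^ i) < 2 ^ j := by
    intro j hj
    have hle : (∑ i ∈ Finset.range j, ε i * 2 ^ i) ≤ ∑ i ∈ Finset.range j, 2 ^ i := by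
      refine Finset.sum_le_sum fun i hi => ?_
      have hi' : i ≤ ν := by simp only [Finset.mem_range] at hi; omega
      rcases hε i hi' with h | h <;> simp [h]
    have := sum_two_pow j
    have : (1 : ℕ) ≤ 2 ^ j := Nat.one_le_two_pow
    omega
  have hsplit : ∀ j, j ≤ ν + 1 →
      T = (∑ i ∈ Finset.range j, ε i * 2 ^ i)
          + 2 ^ j * (∑ k ∈ Finset.range (ν + 1 - j), ε (j + k) * 2 ^ k) := by
    intro j hj
    rw [hT, ← Finset.sum_range_add_sum_Ico _ hj]
    congr 1
    rw [Finset.sum_Ico_eq_sum_range, Finset.mul_sum]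
    refine Finset.sum_congr rfl fun k _ => ?_
    rw [pow_add]; ring
  have hmod : ∀ j, j ≤ ν + 1 → T % 2 ^ j = ∑ i ∈ Finset.range j, ε i * 2 ^ i := by
    intro j hj
    rw [hsplit j hj, Nat.add_mul_mod_self_left]
    exact Nat.mod_eq_of_lt (hlow j hj)
  have hdiv : ∀ j, j ≤ ν + 1 → T / 2 ^ j = ∑ k ∈ Finset.range (ν + 1 - j), ε (j + k) * 2 ^ k := by
    intro j hj
    rw [hsplit j hj, Nat.add_mul_div_left _ _ (Nat.pow_pos (by norm_num)),
      Nat.div_eq_of_lt (hlow j hj), zero_add]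
  have hbit : ∀ j, j ≤ ν → T / 2 ^ j % 2 = ε j := by
    intro j hj
    rw [hdiv j (by omega), show ν + 1 - j = (ν - j) + 1 by omega, Finset.sum_range_succ']
    have hrw : (∑ k ∈ Finset.range (ν - j), ε (j + (k + 1)) * 2 ^ (k + 1))
        = 2 * ∑ k ∈ Finset.range (ν - j), ε (j + (k + 1)) * 2 ^ k := by
      rw [Finset.mul_sum]
      refine Finset.sum_congr rfl fun k _ => ?_
      rw [pow_succ]; ring
    rw [hrw]
    have hεj : ε j ≤ 1 := by rcases hε j hj with h | h <;> omega
    simp only [add_zero, pow_zero, mul_one]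
    omega
  have hTlt : T < 2 ^ (ν + 1) := by
    have := hlow (ν + 1) le_rfl
    rwa [hT]
  rw [m_eq_cF m h0 h1 heven hodd, cF, fb_congr (lt21 T) hTlt]
  unfold fb
  rw [← Finset.sum_sub_distrib]
  refine Finset.sum_congr rfl fun j hj => ?_
  have hj' : j ≤ ν := by simp only [Finset.mem_range] at hj; omega
  rw [hbit j hj', hmod j (by omega)]
  have hcast : ((∑ i ∈ Finset.range j, ε i * 2 ^ i : ℕ) : ℝ)
      = ∑ i ∈ Finset.range j, (ε i : ℝ) * 2 ^ i := by push_cast; rfl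
  rw [hcast, mul_sub, mul_one, Finset.sum_div, Finset.mul_sum]
  congr 1
  refine Finset.sum_congr rfl fun i hi => ?_
  have h2 : (2 : ℝ) ^ ((i : ℤ) - (j : ℤ)) = 2 ^ i / 2 ^ j := by
    rw [zpow_sub₀ (by norm_num : (2:ℝ) ≠ 0), zpow_natCast, zpow_natCast]
  rw [h2]
  ring
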